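/- Let α ∈ (0,1) and ρ' ∈ (0, (λ/γ)(1−α)/α). Suppose (ũ^k, ṽ^k)_{k≥1} ⊂ ℝ^n × ℝ^m satisfies, for every k ≥ 1: ũ^{k+1} ∈ prox_{αγ‖·‖₀}((1−α)ũ^k + αDṽ^k) and F(ũ^{k+1}, ṽ^{k+1}) − F(ũ^{k+1}, ṽ^k) ≤ (ρ'/2)‖ũ^{k+1} − ũ^k‖₂². Then: (a) F(ũ^{k+1}, ṽ^{k+1}) + (1/2)((λ/γ)(1−α)/α − ρ')‖ũ^{k+1} − ũ^k‖₂² ≤ F(ũ^k, ṽ^k) for all k, the sequence F(ũ^k, ṽ^k) is non-increasing and lim_{k→∞} F(ũ^k, ṽ^k) exists; and (b) lim_{k→∞} ‖ũ^{k+1} − ũ^k‖₂ = 0. -/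

import Mathlib

open Matrix Filter

noncomputable section

/-- Matrix–vector multiplication as a map between Euclidean spaces. -/
def mulVecE {n m : ℕ} (A : Matrix (Fin n) (Fin m) ℝ) (v : EuclideanSpace ℝ (Fin m)) :
    EuclideanSpace ℝ (Fin n) :=
  (EuclideanSpace.equiv (Fin n) ℝ).symm (A.mulVec ((EuclideanSpace.equiv (Fin m) ℝ) v))

/-- The `ℓ₀` "norm": the number of nonzero components, as a real number. -/
def l0 {n : ℕ} (u : EuclideanSpace ℝ (Fin n)) : ℝ := ({i : Fin n | u i ≠ 0}).ncard

/-- Membership `x ∈ prox_{t‖·‖₀}(y)`. -/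
def InProxL0 {n : ℕ} (t : ℝ) (x y : EuclideanSpace ℝ (Fin n)) : Prop :=
  ∀ z : EuclideanSpace ℝ (Fin n),
    (1 / (2 * t)) * ‖x - y‖ ^ 2 + l0 x ≤ (1 / (2 * t)) * ‖z - y‖ ^ 2 + l0 z

/-- The objective `F(u,v) = ψ(Bv) + (λ/(2γ))‖u − Dv‖₂² + λ‖u‖₀`. -/
def Fobj {n m p : ℕ} (ψ : EuclideanSpace ℝ (Fin p) → ℝ) (B : Matrix (Fin p) (Fin m) ℝ)
    (D : Matrix (Fin n) (Fin m) ℝ) (lam γ : ℝ) (u : EuclideanSpace ℝ (Fin n))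
    (v : EuclideanSpace ℝ (Fin m)) : ℝ :=
  ψ (mulVecE B v) + (lam / (2 * γ)) * ‖u - mulVecE D v‖ ^ 2 + lam * l0 u

/-- **Lemma 5 of the paper.** For the inexact iterates satisfying the
prox step and the inexactness condition with `ρ' ∈ (0, (λ/γ)(1−α)/α)`:
(a) `F(ũ^{k+1}, ṽ^{k+1}) + (1/2)((λ/γ)(1−α)/α − ρ')‖ũ^{k+1} − ũ^k‖₂² ≤ F(ũ^k, ṽ^k)`,
the values `F(ũ^k, ṽ^k)` are non-increasing and converge; and
(b) `‖ũ^{k+1} − ũ^k‖₂ → 0`. -/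
theorem stmt10 (n m p : ℕ) (ψ : EuclideanSpace ℝ (Fin p) → ℝ)
    (hconv : ConvexOn ℝ Set.univ ψ) (hdiff : ContDiff ℝ 1 ψ)
    (hbdd : BddBelow (Set.range ψ))
    (B : Matrix (Fin p) (Fin m) ℝ) (D : Matrix (Fin n) (Fin m) ℝ) (hD : Dᵀ * D = 1)
    (lam γ : ℝ) (hlam : 0 < lam) (hγ : 0 < γ)
    (α : ℝ) (hα0 : 0 < α) (hα1 : α < 1)
    (ρ' : ℝ) (hρ'0 : 0 < ρ') (hρ'1 : ρ' < (lam / γ) * ((1 - α) / α))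
    (u : ℕ → EuclideanSpace ℝ (Fin n)) (v : ℕ → EuclideanSpace ℝ (Fin m))
    (hprox : ∀ k, 1 ≤ k →
      InProxL0 (α * γ) (u (k + 1)) ((1 - α) • u k + α • mulVecE D (v k)))
    (hineq : ∀ k, 1 ≤ k →
      Fobj ψ B D lam γ (u (k + 1)) (v (k + 1)) - Fobj ψ B D lam γ (u (k + 1)) (v k) ≤
        (ρ' / 2) * ‖u (k + 1) - u k‖ ^ 2) :
    (∀ k, 1 ≤ k →
      Fobj ψ B D lam γ (u (k + 1)) (v (k + 1)) +
          (1 / 2) * ((lam / γ) * ((1 - α) / α) - ρ') * ‖u (k + 1) - u k‖ ^ 2 ≤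
        Fobj ψ B D lam γ (u k) (v k)) ∧
    (∀ k l, 1 ≤ k → k ≤ l →
      Fobj ψ B D lam γ (u l) (v l) ≤ Fobj ψ B D lam γ (u k) (v k)) ∧
    (∃ L : ℝ, Tendsto (fun k => Fobj ψ B D lam γ (u k) (v k)) atTop (nhds L)) ∧
    Tendsto (fun k => ‖u (k + 1) - u k‖) atTop (nhds (0 : ℝ)) := by
  have hα : α ≠ 0 := ne_of_gt hα0
  have hγ' : γ ≠ 0 := ne_of_gt hγ
  have hl0 : ∀ x : EuclideanSpace ℝ (Fin n), 0 ≤ l0 x := fun x => Nat.cast_nonneg _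
  have hcoef : 0 < (lam / γ) * ((1 - α) / α) - ρ' := by linarith
  -- core descent inequality for the u-step
  have core : ∀ k, 1 ≤ k →
      Fobj ψ B D lam γ (u (k + 1)) (v k) +
        (1 / 2) * ((lam / γ) * ((1 - α) / α)) * ‖u (k + 1) - u k‖ ^ 2 ≤
      Fobj ψ B D lam γ (u k) (v k) := by
    intro k hk
    simp only [Fobj]
    set w := mulVecE D (v k) with hw
    set a := u (k + 1) - w with ha
    set b := u k - w with hb
    have hy1 : u (k + 1) - ((1 - α) • u k + α • w) = a - (1 - α) • b := by
      rw [ha, hb]; module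
    have hy2 : u k - ((1 - α) • u k + α • w) = α • b := by
      rw [hb]; module
    have h1 : ‖u (k + 1) - ((1 - α) • u k + α • w)‖ ^ 2
        = ‖a‖ ^ 2 - 2 * (1 - α) * (inner ℝ a b : ℝ) + (1 - α) ^ 2 * ‖b‖ ^ 2 := by
      rw [hy1, norm_sub_sq_real, norm_smul, real_inner_smul_right]
      simp only [Real.norm_eq_abs, mul_pow, sq_abs]
      ring
    have h2 : ‖u k - ((1 - α) • u k + α • w)‖ ^ 2 = α ^ 2 * ‖b‖ ^ 2 := by
      rw [hy2, norm_smul]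
      simp only [Real.norm_eq_abs, mul_pow, sq_abs]
    have h3 : ‖u (k + 1) - u k‖ ^ 2 = ‖a‖ ^ 2 - 2 * (inner ℝ a b : ℝ) + ‖b‖ ^ 2 := by
      have hab : u (k + 1) - u k = a - b := by rw [ha, hb]; module
      rw [hab, norm_sub_sq_real]
    have hP := hprox k hk (u k)
    rw [h1, h2] at hP
    have h2ag : (0 : ℝ) < 2 * (α * γ) := by positivity
    have key : ‖a‖ ^ 2 - 2 * (1 - α) * (inner ℝ a b : ℝ) + (1 - α) ^ 2 * ‖b‖ ^ 2
          + 2 * (α * γ) * l0 (u (k + 1))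
        ≤ α ^ 2 * ‖b‖ ^ 2 + 2 * (α * γ) * l0 (u k) := by
      have hmul := mul_le_mul_of_nonneg_left hP h2ag.le
      have eL : 2 * (α * γ) *
            (1 / (2 * (α * γ)) * (‖a‖ ^ 2 - 2 * (1 - α) * (inner ℝ a b : ℝ)
              + (1 - α) ^ 2 * ‖b‖ ^ 2) + l0 (u (k + 1)))
          = ‖a‖ ^ 2 - 2 * (1 - α) * (inner ℝ a b : ℝ) + (1 - α) ^ 2 * ‖b‖ ^ 2
            + 2 * (α * γ) * l0 (u (k + 1)) := by
        field_simp
      have eR : 2 * (α * γ) *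
            (1 / (2 * (α * γ)) * (α ^ 2 * ‖b‖ ^ 2) + l0 (u k))
          = α ^ 2 * ‖b‖ ^ 2 + 2 * (α * γ) * l0 (u k) := by
        field_simp
      linarith
    have main : lam * α * ‖a‖ ^ 2
          + lam * (1 - α) * (‖a‖ ^ 2 - 2 * (inner ℝ a b : ℝ) + ‖b‖ ^ 2)
          + 2 * (α * γ) * lam * l0 (u (k + 1))
        ≤ lam * α * ‖b‖ ^ 2 + 2 * (α * γ) * lam * l0 (u k) := by
      nlinarith [mul_le_mul_of_nonneg_left key hlam.le]
    have hdiv : (lam * α * ‖a‖ ^ 2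
          + lam * (1 - α) * (‖a‖ ^ 2 - 2 * (inner ℝ a b : ℝ) + ‖b‖ ^ 2)
          + 2 * (α * γ) * lam * l0 (u (k + 1))) / (2 * (α * γ))
        ≤ (lam * α * ‖b‖ ^ 2 + 2 * (α * γ) * lam * l0 (u k)) / (2 * (α * γ)) := by
      gcongr
    have e1 : lam / (2 * γ) * ‖a‖ ^ 2 + lam * l0 (u (k + 1))
          + (1 / 2) * ((lam / γ) * ((1 - α) / α))
              * (‖a‖ ^ 2 - 2 * (inner ℝ a b : ℝ) + ‖b‖ ^ 2)
        = (lam * α * ‖a‖ ^ 2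
          + lam * (1 - α) * (‖a‖ ^ 2 - 2 * (inner ℝ a b : ℝ) + ‖b‖ ^ 2)
          + 2 * (α * γ) * lam * l0 (u (k + 1))) / (2 * (α * γ)) := by
      field_simp
      ring
    have e2 : lam / (2 * γ) * ‖b‖ ^ 2 + lam * l0 (u k)
        = (lam * α * ‖b‖ ^ 2 + 2 * (α * γ) * lam * l0 (u k)) / (2 * (α * γ)) := by
      field_simp
    rw [h3]
    linarith
  -- part (a)
  have parta : ∀ k, 1 ≤ k →
      Fobj ψ B D lam γ (u (k + 1)) (v (k + 1)) +
          (1 / 2) * ((lam / γ) * ((1 - α) / α) - ρ') * ‖u (k + 1) - u k‖ ^ 2 ≤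
        Fobj ψ B D lam γ (u k) (v k) := by
    intro k hk
    have h1 := core k hk
    have h2 := hineq k hk
    linarith
  -- monotonicity
  have mono : ∀ k l, 1 ≤ k → k ≤ l →
      Fobj ψ B D lam γ (u l) (v l) ≤ Fobj ψ B D lam γ (u k) (v k) := by
    intro k l hk hkl
    induction l, hkl using Nat.le_induction with
    | base => exact le_refl _
    | succ l hl ih =>
      have h1 := parta l (le_trans hk hl)
      have hnn : 0 ≤ ((lam / γ) * ((1 - α) / α) - ρ') * ‖u (l + 1) - u l‖ ^ 2 :=
        mul_nonneg hcoef.le (sq_nonneg _)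
      linarith
  -- lower bound
  obtain ⟨c0, hc0⟩ := hbdd
  have hlow : ∀ k, c0 ≤ Fobj ψ B D lam γ (u k) (v k) := by
    intro k
    simp only [Fobj]
    have h1 : c0 ≤ ψ (mulVecE B (v k)) := hc0 ⟨_, rfl⟩
    have h2 : 0 ≤ lam / (2 * γ) * ‖u k - mulVecE D (v k)‖ ^ 2 := by positivity
    have h3 : 0 ≤ lam * l0 (u k) := mul_nonneg hlam.le (hl0 _)
    linarith
  -- convergence of the values
  set g : ℕ → ℝ := fun k => Fobj ψ B D lam γ (u (k + 1)) (v (k + 1)) with hg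
  have hanti : Antitone g := antitone_nat_of_succ_le fun k =>
    mono (k + 1) (k + 2) (by omega) (by omega)
  have hbdd2 : BddBelow (Set.range g) := ⟨c0, by rintro x ⟨k, rfl⟩; exact hlow (k + 1)⟩
  have hgL : Tendsto g atTop (nhds (⨅ i, g i)) := tendsto_atTop_ciInf hanti hbdd2
  have hL : Tendsto (fun k => Fobj ψ B D lam γ (u k) (v k)) atTop (nhds (⨅ i, g i)) :=
    (tendsto_add_atTop_iff_nat 1).mp hgL
  have hL1 : Tendsto (fun k => Fobj ψ B D lam γ (u (k + 1)) (v (k + 1))) atTop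
      (nhds (⨅ i, g i)) := hgL
  -- part (b)
  have hupper : Tendsto (fun k => (2 / ((lam / γ) * ((1 - α) / α) - ρ')) *
      (Fobj ψ B D lam γ (u k) (v k) - Fobj ψ B D lam γ (u (k + 1)) (v (k + 1))))
      atTop (nhds 0) := by
    have := (hL.sub hL1).const_mul (2 / ((lam / γ) * ((1 - α) / α) - ρ'))
    simpa using this
  have hub : ∀ᶠ k in atTop, ‖u (k + 1) - u k‖ ^ 2 ≤
      (2 / ((lam / γ) * ((1 - α) / α) - ρ')) *
      (Fobj ψ B D lam γ (u k) (v k) - Fobj ψ B D lam γ (u (k + 1)) (v (k + 1))) := by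
    filter_upwards [eventually_ge_atTop 1] with k hk
    have h := parta k hk
    rw [div_mul_eq_mul_div, le_div_iff₀ hcoef]
    linarith
  have hlb : ∀ᶠ k in atTop, (0 : ℝ) ≤ ‖u (k + 1) - u k‖ ^ 2 :=
    Eventually.of_forall fun k => sq_nonneg _
  have hsq0 : Tendsto (fun k => ‖u (k + 1) - u k‖ ^ 2) atTop (nhds 0) :=
    tendsto_of_tendsto_of_tendsto_of_le_of_le' tendsto_const_nhds hupper hlb hub
  have hnorm0 : Tendsto (fun k => ‖u (k + 1) - u k‖) atTop (nhds 0) := by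
    have hs := (Real.continuous_sqrt.tendsto 0).comp hsq0
    simp only [Function.comp_def, Real.sqrt_zero] at hs
    have heq : (fun k => Real.sqrt (‖u (k + 1) - u k‖ ^ 2)) =
        fun k => ‖u (k + 1) - u k‖ := by
      funext k; exact Real.sqrt_sq (norm_nonneg _)
    rwa [heq] at hs
  exact ⟨parta, mono, ⟨⨅ i, g i, hL⟩, hnorm0⟩


end
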